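/- arXiv:1610.03415 — 2 statements merged into one kernel-verified Lean document; each statement's English description precedes it below -/
import Mathlib

section
/- Let U be a connected Polish space, let Ū = U ⊔ {†} be the Polish space obtained from U by adjoining an isolated point † ('death state'), and let κ be a Markov kernel on Ū that is strong Feller and absorbing at † (i.e. κ(†,{†}) = 1). If κ admits an invariant probability measure μ with μ(U) = 1 whose topological support equals U, then μ is the only invariant probability measure of κ that is concentrated on U (i.e. the only invariant ν with ν(U) = 1). -/
open MeasureTheory ProbabilityTheory
open scoped ENNReal

/-- A Markov kernel is *strong Feller* if it maps bounded Borel measurable functions to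
bounded continuous functions. -/
def IsStrongFeller {X : Type*} [TopologicalSpace X] [MeasurableSpace X]
    (κ : Kernel X X) : Prop :=
  ∀ ψ : X → ℝ, Measurable ψ → (∃ C, ∀ x, |ψ x| ≤ C) →
    Continuous fun x => ∫ y, ψ y ∂(κ x)

/-- A measure `μ` is *invariant* for the kernel `κ` if `μ A = ∫ κ(x, A) μ(dx)` for every
Borel set `A`. -/
def KernelInvariant {X : Type*} [MeasurableSpace X] (κ : Kernel X X) (μ : Measure X) : Prop :=
  ∀ A : Set X, MeasurableSet A → μ A = ∫⁻ x, κ x A ∂μ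

/-- The topological support of a measure: the set of points all of whose open
neighbourhoods have positive measure (the smallest closed set of full measure). -/
def measureSupport {X : Type*} [TopologicalSpace X] [MeasurableSpace X]
    (μ : Measure X) : Set X :=
  {x | ∀ V : Set X, IsOpen V → x ∈ V → 0 < μ V}


namespace UniqueInvAux

variable {X : Type*} [MeasurableSpace X]

lemma bind_apply' (κ : Kernel X X) (ρ : Measure X) {A : Set X} (hA : MeasurableSet A) :
    ρ.bind κ A = ∫⁻ x, κ x A ∂ρ :=
  Measure.bind_apply hA κ.measurable.aemeasurable

lemma bind_univ (κ : Kernel X X) [IsMarkovKernel κ] (ρ : Measure X) :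
    ρ.bind κ Set.univ = ρ Set.univ := by
  rw [bind_apply' κ ρ MeasurableSet.univ]
  simp [measure_univ]

lemma bind_mono (κ : Kernel X X) {a b : Measure X} (hab : a ≤ b) :
    a.bind κ ≤ b.bind κ := by
  refine Measure.le_iff.2 fun A hA => ?_
  rw [bind_apply' κ a hA, bind_apply' κ b hA]
  exact lintegral_mono' hab le_rfl

lemma bind_add (κ : Kernel X X) (a b : Measure X) :
    (a + b).bind κ = a.bind κ + b.bind κ := by
  ext A hA
  rw [Measure.add_apply, bind_apply' κ _ hA, bind_apply' κ _ hA, bind_apply' κ _ hA,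
    lintegral_add_measure]

lemma bind_smul (κ : Kernel X X) (c : ℝ≥0∞) (a : Measure X) :
    (c • a).bind κ = c • a.bind κ := by
  ext A hA
  rw [Measure.smul_apply, bind_apply' κ _ hA, bind_apply' κ _ hA, lintegral_smul_measure]

lemma bind_ac (κ : Kernel X X) {a b : Measure X} (hab : a ≪ b) :
    a.bind κ ≪ b.bind κ := by
  refine Measure.AbsolutelyContinuous.mk fun E hE hE0 => ?_
  rw [bind_apply' κ _ hE] at hE0 ⊢
  have h0 : (fun x => κ x E) =ᵐ[b] 0 := (lintegral_eq_zero_iff (κ.measurable_coe hE)).1 hE0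
  exact (lintegral_eq_zero_iff (κ.measurable_coe hE)).2 (hab.ae_eq h0)

lemma measure_eq_of_le_of_univ {a b : Measure X} [IsFiniteMeasure b]
    (hle : a ≤ b) (hu : a Set.univ = b Set.univ) : a = b := by
  ext A hA
  by_contra hne
  have h1 : a A < b A := (Measure.le_iff'.1 hle A).lt_of_ne hne
  have h2 : a Aᶜ ≤ b Aᶜ := Measure.le_iff'.1 hle Aᶜ
  have hlt : a A + a Aᶜ < b A + b Aᶜ :=
    ENNReal.add_lt_add_of_lt_of_le ((h2.trans_lt (measure_lt_top b Aᶜ)).ne) h1 h2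
  rw [measure_add_measure_compl hA, measure_add_measure_compl hA] at hlt
  exact hlt.ne hu

lemma ae_eq_one_of_lintegral_eq (ρ : Measure X) [IsFiniteMeasure ρ] {f : X → ℝ≥0∞}
    (hf : Measurable f) (hle : ∀ x, f x ≤ 1) (hint : ∫⁻ x, f x ∂ρ = ρ Set.univ) :
    ∀ᵐ x ∂ρ, f x = 1 := by
  have hfin : ∫⁻ x, f x ∂ρ ≠ ∞ := by rw [hint]; exact measure_ne_top ρ _
  have hz : ∫⁻ x, (1 - f x) ∂ρ = 0 := by
    rw [lintegral_sub hf hfin (Filter.Eventually.of_forall hle), lintegral_one, hint, tsub_self]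
  have h0 := (lintegral_eq_zero_iff (measurable_const.sub hf)).1 hz
  filter_upwards [h0] with x hx
  have hx' : (1 : ℝ≥0∞) - f x = 0 := hx
  exact le_antisymm (hle x) (tsub_eq_zero_iff_le.1 hx')

lemma ae_of_ae_withDensity {μ : Measure X} {g : X → ℝ≥0∞} (hg : Measurable g)
    {P : Set X} (hP : MeasurableSet P) (h : ∀ᵐ x ∂(μ.withDensity g), x ∈ P) :
    ∀ᵐ x ∂μ, g x ≠ 0 → x ∈ P := by
  have h0 : μ.withDensity g Pᶜ = 0 := by
    rw [ae_iff] at h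
    simpa [Set.compl_def] using h
  rw [withDensity_apply g hP.compl] at h0
  have h1 := (setLIntegral_eq_zero_iff hP.compl hg).1 h0
  filter_upwards [h1] with x hx hgx
  by_contra hxP
  exact hgx (hx hxP)

lemma le_withDensity_min {μ : Measure X} {f g : X → ℝ≥0∞} (hf : Measurable f)
    (hg : Measurable g) {ξ : Measure X} (h1 : ξ ≤ μ.withDensity f)
    (h2 : ξ ≤ μ.withDensity g) :
    ξ ≤ μ.withDensity (fun x => min (f x) (g x)) := by
  refine Measure.le_iff.2 fun A hA => ?_
  set S := A ∩ {x | f x ≤ g x} with hSdef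
  set T := A ∩ {x | g x < f x} with hTdef
  have hSm : MeasurableSet S := hA.inter (measurableSet_le hf hg)
  have hTm : MeasurableSet T := hA.inter (measurableSet_lt hg hf)
  have hunion : S ∪ T = A := by
    ext x
    constructor
    · rintro (⟨hx, _⟩ | ⟨hx, _⟩) <;> exact hx
    · intro hx
      rcases le_or_gt (f x) (g x) with hfg | hfg
      · exact Or.inl ⟨hx, hfg⟩
      · exact Or.inr ⟨hx, hfg⟩
  have hdisj : Disjoint S T := by
    refine Set.disjoint_left.2 ?_
    rintro x ⟨_, hx1⟩ ⟨_, hx2⟩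
    exact absurd (Set.mem_setOf.mp hx1) (not_le.2 (Set.mem_setOf.mp hx2))
  calc ξ A = ξ (S ∪ T) := by rw [hunion]
    _ ≤ ξ S + ξ T := measure_union_le S T
    _ ≤ (μ.withDensity f) S + (μ.withDensity g) T :=
        add_le_add (Measure.le_iff.1 h1 S hSm) (Measure.le_iff.1 h2 T hTm)
    _ = (∫⁻ x in S, min (f x) (g x) ∂μ) + ∫⁻ x in T, min (f x) (g x) ∂μ := by
        rw [withDensity_apply f hSm, withDensity_apply g hTm]
        congr 1
        · exact setLIntegral_congr_fun hSm
            (fun x hx => (min_eq_left hx.2).symm)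
        · exact setLIntegral_congr_fun hTm
            (fun x hx => (min_eq_right hx.2.le).symm)
    _ = ∫⁻ x in S ∪ T, min (f x) (g x) ∂μ := (lintegral_union hTm hdisj).symm
    _ = (μ.withDensity (fun x => min (f x) (g x))) A := by
        rw [hunion, withDensity_apply _ hA]

end UniqueInvAux

namespace UniqueInvAux

variable {X : Type*} [MeasurableSpace X]

/-- The key structural lemma: if `ν = h·μ` with `μ, ν` invariant probability measures for a
Markov kernel `κ`, then for each finite `c`, `μ`-a.e. point of `{h > c}` jumps into `{h > c}`
with probability one, and similarly for `{h < c}`. -/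
lemma level_invariant (κ : Kernel X X) [IsMarkovKernel κ]
    (μ ν : Measure X) [IsProbabilityMeasure μ] [IsProbabilityMeasure ν]
    (hμ : μ.bind κ = μ) (hν : ν.bind κ = ν)
    {h : X → ℝ≥0∞} (hh : Measurable h) (hνh : μ.withDensity h = ν)
    {c : ℝ≥0∞} (hcT : c ≠ ∞) :
    (∀ᵐ x ∂μ, c < h x → κ x {y | c < h y} = 1) ∧
    (∀ᵐ x ∂μ, h x < c → κ x {y | h y < c} = 1) := by
  set m : X → ℝ≥0∞ := fun x => min (h x) c with hm_def
  have hm : Measurable m := hh.min measurable_const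
  set lam : Measure X := μ.withDensity m with hlam_def
  have hlam_le_nu : lam ≤ ν := by
    rw [← hνh]
    exact withDensity_mono (Filter.Eventually.of_forall fun x => min_le_left _ _)
  have hlam_le_cmu : lam ≤ c • μ := by
    have h1 : lam ≤ μ.withDensity (fun _ => c) :=
      withDensity_mono (Filter.Eventually.of_forall fun x => min_le_right _ _)
    rwa [withDensity_const] at h1
  haveI hlam_fin : IsFiniteMeasure lam := by
    refine ⟨lt_of_le_of_lt (Measure.le_iff'.1 hlam_le_cmu Set.univ) ?_⟩
    rw [Measure.smul_apply, measure_univ, smul_eq_mul, mul_one]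
    exact hcT.lt_top
  -- invariance of lam
  have hlam_inv : lam.bind κ = lam := by
    refine measure_eq_of_le_of_univ ?_ (bind_univ κ lam)
    have h1 : lam.bind κ ≤ μ.withDensity h := by
      rw [hνh, ← hν]; exact bind_mono κ hlam_le_nu
    have h2 : lam.bind κ ≤ μ.withDensity (fun _ => c) := by
      rw [withDensity_const]
      have := bind_mono κ hlam_le_cmu
      rwa [bind_smul, hμ] at this
    exact le_withDensity_min hh measurable_const h1 h2
  -- the two remainder densities
  set gA : X → ℝ≥0∞ := fun x => h x - m x with hgA_def
  set gB : X → ℝ≥0∞ := fun x => c - m x with hgB_def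
  have hgAm : Measurable gA := hh.sub hm
  have hgBm : Measurable gB := measurable_const.sub hm
  have hsplitA : ν = lam + μ.withDensity gA := by
    have hfun : (fun x => m x + gA x) = h :=
      funext fun x => add_tsub_cancel_of_le (min_le_left _ _)
    calc ν = μ.withDensity h := hνh.symm
      _ = μ.withDensity (m + gA) := by rw [show m + gA = h from hfun]
      _ = lam + μ.withDensity gA := withDensity_add_left hm gA
  have hsplitB : c • μ = lam + μ.withDensity gB := by
    have hfun : (fun x => m x + gB x) = fun _ => c :=
      funext fun x => add_tsub_cancel_of_le (min_le_right _ _)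
    calc c • μ = μ.withDensity (fun _ => c) := (withDensity_const c).symm
      _ = μ.withDensity (m + gB) := by rw [show m + gB = fun _ => c from hfun]
      _ = lam + μ.withDensity gB := withDensity_add_left hm gB
  -- invariance of the remainders
  have hcancel : ∀ ρ : Measure X, lam + ρ.bind κ = lam + ρ → ρ.bind κ = ρ := by
    intro ρ hρ
    ext s hs
    have := congrArg (fun m : Measure X => m s) hρ
    simp only [Measure.add_apply] at this
    exact (ENNReal.add_right_inj (measure_ne_top lam s)).1 this
  have hρA_inv : (μ.withDensity gA).bind κ = μ.withDensity gA := by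
    refine hcancel _ ?_
    calc lam + (μ.withDensity gA).bind κ = lam.bind κ + (μ.withDensity gA).bind κ := by
          rw [hlam_inv]
      _ = (lam + μ.withDensity gA).bind κ := (bind_add κ _ _).symm
      _ = ν.bind κ := by rw [← hsplitA]
      _ = ν := hν
      _ = lam + μ.withDensity gA := hsplitA
  have hρB_inv : (μ.withDensity gB).bind κ = μ.withDensity gB := by
    refine hcancel _ ?_
    calc lam + (μ.withDensity gB).bind κ = lam.bind κ + (μ.withDensity gB).bind κ := by
          rw [hlam_inv]
      _ = (lam + μ.withDensity gB).bind κ := (bind_add κ _ _).symm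
      _ = (c • μ).bind κ := by rw [← hsplitB]
      _ = c • μ := by rw [bind_smul, hμ]
      _ = lam + μ.withDensity gB := hsplitB
  haveI hρA_fin : IsFiniteMeasure (μ.withDensity gA) := by
    refine isFiniteMeasure_of_le ν ?_
    rw [hsplitA]
    exact Measure.le_add_left le_rfl
  haveI hρB_fin : IsFiniteMeasure (μ.withDensity gB) := by
    have hle : μ.withDensity gB ≤ c • μ := by
      rw [hsplitB]; exact Measure.le_add_left le_rfl
    refine ⟨lt_of_le_of_lt (Measure.le_iff'.1 hle Set.univ) ?_⟩
    rw [Measure.smul_apply, measure_univ, smul_eq_mul, mul_one]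
    exact hcT.lt_top
  -- the level sets
  set A : Set X := {y | c < h y} with hA_def
  set B : Set X := {y | h y < c} with hB_def
  have hA : MeasurableSet A := measurableSet_lt measurable_const hh
  have hB : MeasurableSet B := measurableSet_lt hh measurable_const
  -- gA vanishes off A, gB vanishes off B
  have hgA_zero : ∀ x, x ∉ A → gA x = 0 := by
    intro x hx
    have : h x ≤ c := not_lt.1 hx
    simp only [hgA_def, hm_def, min_eq_left this, tsub_self]
  have hgB_zero : ∀ x, x ∉ B → gB x = 0 := by
    intro x hx
    have : c ≤ h x := not_lt.1 hx
    simp only [hgB_def, hm_def, min_eq_right this, tsub_self]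
  have hgA_ne : ∀ x, gA x ≠ 0 → c < h x := by
    intro x hx
    by_contra hcx
    exact hx (hgA_zero x hcx)
  have hgB_ne : ∀ x, gB x ≠ 0 → h x < c := by
    intro x hx
    by_contra hcx
    exact hx (hgB_zero x hcx)
  -- full measure of the level set for the remainder measures
  have hρA_compl : μ.withDensity gA Aᶜ = 0 := by
    rw [withDensity_apply _ hA.compl]
    rw [setLIntegral_congr_fun hA.compl
      (fun x hx => hgA_zero x hx)]
    simp
  have hρB_compl : μ.withDensity gB Bᶜ = 0 := by
    rw [withDensity_apply _ hB.compl]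
    rw [setLIntegral_congr_fun hB.compl
      (fun x hx => hgB_zero x hx)]
    simp
  have hρA_full : μ.withDensity gA A = μ.withDensity gA Set.univ := by
    rw [← measure_add_measure_compl hA, hρA_compl, add_zero]
  have hρB_full : μ.withDensity gB B = μ.withDensity gB Set.univ := by
    rw [← measure_add_measure_compl hB, hρB_compl, add_zero]
  -- a.e. jump probabilities
  have haeA : ∀ᵐ x ∂(μ.withDensity gA), κ x A = 1 := by
    refine ae_eq_one_of_lintegral_eq _ (κ.measurable_coe hA) (fun x => prob_le_one) ?_
    rw [← bind_apply' κ _ hA, hρA_inv, hρA_full]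
  have haeB : ∀ᵐ x ∂(μ.withDensity gB), κ x B = 1 := by
    refine ae_eq_one_of_lintegral_eq _ (κ.measurable_coe hB) (fun x => prob_le_one) ?_
    rw [← bind_apply' κ _ hB, hρB_inv, hρB_full]
  have hPA : MeasurableSet {x | κ x A = 1} := (κ.measurable_coe hA) (measurableSet_singleton 1)
  have hPB : MeasurableSet {x | κ x B = 1} := (κ.measurable_coe hB) (measurableSet_singleton 1)
  constructor
  · have := ae_of_ae_withDensity hgAm hPA haeA
    filter_upwards [this] with x hx hcx
    refine hx ?_
    intro h0
    rw [hgA_def] at h0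
    have : h x ≤ min (h x) c := tsub_eq_zero_iff_le.1 h0
    exact absurd ((le_min_iff.1 this).2) (not_le.2 hcx)
  · have := ae_of_ae_withDensity hgBm hPB haeB
    filter_upwards [this] with x hx hcx
    refine hx ?_
    intro h0
    rw [hgB_def] at h0
    have : c ≤ min (h x) c := tsub_eq_zero_iff_le.1 h0
    exact absurd ((le_min_iff.1 this).1) (not_le.2 hcx)

end UniqueInvAux

open UniqueInvAux in
/-- Let `U` be a connected Polish space and `Ū = U ⊕ Unit` the Polish
space obtained by adjoining an isolated death state `† = Sum.inr ()`.  Let `κ` be a strong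
Feller Markov kernel on `Ū` absorbing at `†`.  If `κ` admits an invariant probability
measure `μ` concentrated on `U` whose topological support equals `U`, then `μ` is the
only invariant probability measure of `κ` concentrated on `U`. -/
theorem unique_invariant_of_full_support
    {U : Type*} [TopologicalSpace U] [PolishSpace U] [ConnectedSpace U]
    [MeasurableSpace (U ⊕ Unit)] [BorelSpace (U ⊕ Unit)]
    (κ : Kernel (U ⊕ Unit) (U ⊕ Unit)) [IsMarkovKernel κ]
    (hSF : IsStrongFeller κ)
    (habs : κ (Sum.inr ()) {Sum.inr ()} = 1)
    (μ : Measure (U ⊕ Unit)) [IsProbabilityMeasure μ]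
    (hμinv : KernelInvariant κ μ)
    (hμfull : μ (Set.range Sum.inl) = 1)
    (hμsupp : measureSupport μ = Set.range Sum.inl) :
    ∀ ν : Measure (U ⊕ Unit), IsProbabilityMeasure ν → KernelInvariant κ ν →
      ν (Set.range Sum.inl) = 1 → ν = μ := by
  intro ν hνP hνinv hνfull
  haveI := hνP
  classical
  set RU : Set (U ⊕ Unit) := Set.range Sum.inl with hRU_def
  have hRUopen : IsOpen RU := isOpen_range_inl
  have hRUmeas : MeasurableSet RU := hRUopen.measurableSet
  have hμRUc : μ RUᶜ = 0 := by
    rw [measure_compl hRUmeas (measure_ne_top μ _), hμfull, measure_univ, tsub_self]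
  have hνRUc : ν RUᶜ = 0 := by
    rw [measure_compl hRUmeas (measure_ne_top ν _), hνfull, measure_univ, tsub_self]
  -- invariance in `bind` form
  have hμbind : μ.bind κ = μ := by
    ext s hs; rw [bind_apply' κ μ hs]; exact (hμinv s hs).symm
  have hνbind : ν.bind κ = ν := by
    ext s hs; rw [bind_apply' κ ν hs]; exact (hνinv s hs).symm
  -- continuity of hitting probabilities (strong Feller)
  have hcont : ∀ A : Set (U ⊕ Unit), MeasurableSet A → Continuous fun x => (κ x A).toReal := by
    intro A hA
    have hb : ∃ C, ∀ x : U ⊕ Unit, |A.indicator (1 : (U ⊕ Unit) → ℝ) x| ≤ C := by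
      refine ⟨1, fun x => ?_⟩
      by_cases hx : x ∈ A <;> simp [Set.indicator_apply, hx]
    have hc := hSF (A.indicator (1 : (U ⊕ Unit) → ℝ)) (measurable_one.indicator hA) hb
    have heq : (fun x => ∫ y, A.indicator (1 : (U ⊕ Unit) → ℝ) y ∂(κ x))
        = fun x => (κ x A).toReal := by
      funext x
      exact integral_indicator_one hA
    rwa [heq] at hc
  -- support positivity
  have hsupp_pos : ∀ V : Set (U ⊕ Unit), IsOpen V → ∀ x ∈ RU, x ∈ V → 0 < μ V := by
    intro V hV x hxRU hxV
    rw [← hμsupp] at hxRU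
    exact hxRU V hV hxV
  -- a helper to extract a point of RU from a positive-measure set
  have hpoint : ∀ (ρ : Measure (U ⊕ Unit)) (E : Set (U ⊕ Unit)), ρ RUᶜ = 0 → ρ {x | x ∉ E} = 0 →
      ρ Set.univ ≠ 0 → ∃ x ∈ RU, x ∈ E := by
    intro ρ E hρRUc hρE hρ0
    have hsub : (Set.univ : Set (U ⊕ Unit)) ⊆ {x | x ∉ E} ∪ (E ∩ RU) ∪ RUᶜ := by
      intro x _
      by_cases hxE : x ∈ E
      · by_cases hxRU : x ∈ RU
        · exact Or.inl (Or.inr ⟨hxE, hxRU⟩)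
        · exact Or.inr hxRU
      · exact Or.inl (Or.inl hxE)
    have hne : ρ (E ∩ RU) ≠ 0 := by
      intro h0
      apply hρ0
      refine le_antisymm ?_ zero_le
      calc ρ Set.univ ≤ ρ ({x | x ∉ E} ∪ (E ∩ RU) ∪ RUᶜ) := measure_mono hsub
        _ ≤ ρ ({x | x ∉ E} ∪ (E ∩ RU)) + ρ RUᶜ := measure_union_le _ _
        _ ≤ ρ {x | x ∉ E} + ρ (E ∩ RU) + ρ RUᶜ := by
            exact add_le_add (measure_union_le _ _) le_rfl
        _ = 0 := by rw [hρE, h0, hρRUc]; simp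
    obtain ⟨x, hxE, hxRU⟩ := nonempty_of_measure_ne_zero hne
    exact ⟨x, hxRU, hxE⟩
  -- Step 1: ν ≪ μ
  have hac : ν ≪ μ := by
    set σ := ν.singularPart μ with hσ_def
    by_cases hσ0 : σ = 0
    · have hdec := ν.haveLebesgueDecomposition_add μ
      rw [← hσ_def, hσ0, zero_add] at hdec
      rw [hdec]
      exact withDensity_absolutelyContinuous μ _
    · exfalso
      set ρa := μ.withDensity (ν.rnDeriv μ) with hρa_def
      have hρa_ac : ρa.bind κ ≪ μ := by
        have h1 : ρa ≪ μ := withDensity_absolutelyContinuous μ _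
        have h2 := bind_ac κ h1
        rwa [hμbind] at h2
      have hdec := ν.haveLebesgueDecomposition_add μ
      haveI : IsFiniteMeasure σ := isFiniteMeasure_of_le ν (Measure.singularPart_le ν μ)
      haveI : IsFiniteMeasure (σ.bind κ) :=
        ⟨by rw [bind_univ κ σ]; exact measure_lt_top σ _⟩
      haveI : IsFiniteMeasure ρa := by
        refine isFiniteMeasure_of_le ν ?_
        rw [hdec]
        exact Measure.le_add_left le_rfl
      haveI : IsFiniteMeasure (ρa.bind κ) :=
        ⟨by rw [bind_univ κ ρa]; exact measure_lt_top ρa _⟩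
      have hbind_eq : ν = σ.bind κ + ρa.bind κ := by
        calc ν = ν.bind κ := hνbind.symm
          _ = (σ + ρa).bind κ := by rw [← hdec]
          _ = σ.bind κ + ρa.bind κ := bind_add κ _ _
      have hσ_le : σ ≤ σ.bind κ := by
        have h2 : ν.singularPart μ
            = (σ.bind κ).singularPart μ + (ρa.bind κ).singularPart μ := by
          conv_lhs => rw [hbind_eq]
          exact Measure.singularPart_add _ _ μ
        rw [Measure.singularPart_eq_zero_of_ac hρa_ac, add_zero] at h2
        calc σ = (σ.bind κ).singularPart μ := h2
          _ ≤ σ.bind κ := Measure.singularPart_le _ _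
      have hσinv : σ.bind κ = σ :=
        (measure_eq_of_le_of_univ hσ_le (bind_univ κ σ).symm).symm
      obtain ⟨S, hSmeas, hσS, hμSc⟩ := Measure.mutuallySingular_singularPart ν μ
      set A : Set (U ⊕ Unit) := Sᶜ with hA_def
      have hA : MeasurableSet A := hSmeas.compl
      have hμA : μ A = 0 := hμSc
      have hσAc : σ Aᶜ = 0 := by rwa [hA_def, compl_compl]
      have hσA_full : σ A = σ Set.univ := by
        rw [← measure_add_measure_compl hA, hσAc, add_zero]
      -- κ x A = 0 for μ-a.e. x
      have hκA0 : ∀ᵐ x ∂μ, κ x A = 0 := by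
        have : ∫⁻ x, κ x A ∂μ = 0 := by
          rw [← bind_apply' κ μ hA, hμbind, hμA]
        exact (lintegral_eq_zero_iff (κ.measurable_coe hA)).1 this
      -- κ x A = 1 for σ-a.e. x
      have hκA1 : ∀ᵐ x ∂σ, κ x A = 1 := by
        refine ae_eq_one_of_lintegral_eq σ (κ.measurable_coe hA) (fun x => prob_le_one) ?_
        rw [← bind_apply' κ σ hA, hσinv, hσA_full]
      -- extract a point of RU where κ · A = 1
      have hσRUc : σ RUᶜ = 0 := by
        have := Measure.le_iff'.1 (Measure.singularPart_le ν μ) RUᶜ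
        rw [hνRUc] at this
        exact le_antisymm this zero_le
      have hσuniv : σ Set.univ ≠ 0 := fun h0 => hσ0 (Measure.measure_univ_eq_zero.1 h0)
      obtain ⟨x₁, hx₁RU, hx₁⟩ :=
        hpoint σ {x | κ x A = 1} hσRUc (ae_iff.1 hκA1) hσuniv
      -- contradiction with the support of μ
      set f : (U ⊕ Unit) → ℝ := fun x => (κ x A).toReal with hf_def
      have hfc : Continuous f := hcont A hA
      have hVopen : IsOpen (f ⁻¹' Set.Ioi 0) := isOpen_Ioi.preimage hfc
      have hVnull : μ (f ⁻¹' Set.Ioi 0) = 0 := by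
        refine measure_mono_null ?_ (ae_iff.1 hκA0)
        intro x hx
        simp only [Set.mem_setOf_eq]
        intro h0
        simp only [hf_def, Set.mem_preimage, Set.mem_Ioi, h0, ENNReal.toReal_zero] at hx
        exact lt_irrefl _ hx
      have hx₁V : x₁ ∈ f ⁻¹' Set.Ioi 0 := by
        simp only [hf_def, Set.mem_preimage, Set.mem_Ioi]
        have : κ x₁ A = 1 := hx₁
        rw [this, ENNReal.toReal_one]
        exact one_pos
      exact absurd hVnull (hsupp_pos _ hVopen x₁ hx₁RU hx₁V).ne'
  -- Step 2: `ν` has an invariant density w.r.t. `μ`; conclude `ν = μ` by connectedness.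
  set h : (U ⊕ Unit) → ℝ≥0∞ := ν.rnDeriv μ with hh_def
  have hh : Measurable h := Measure.measurable_rnDeriv ν μ
  have hνh : μ.withDensity h = ν := by
    have hdec := ν.haveLebesgueDecomposition_add μ
    rw [Measure.singularPart_eq_zero_of_ac hac, zero_add] at hdec
    exact hdec.symm
  by_contra hne
  -- both strict level sets `{h > 1}` and `{h < 1}` have positive measure
  have hgt : μ {x | 1 < h x} ≠ 0 := by
    intro h0
    apply hne
    have hle1 : ∀ᵐ x ∂μ, h x ≤ 1 := by
      rw [ae_iff]; simpa [not_le] using h0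
    have hle : ν ≤ μ := by
      rw [← hνh]
      refine Measure.le_iff.2 fun A hA => ?_
      rw [withDensity_apply _ hA]
      calc ∫⁻ x in A, h x ∂μ ≤ ∫⁻ x in A, 1 ∂μ :=
            lintegral_mono_ae (ae_restrict_of_ae hle1)
        _ = μ A := setLIntegral_one A
    exact measure_eq_of_le_of_univ hle (by simp)
  have hlt : μ {x | h x < 1} ≠ 0 := by
    intro h0
    apply hne
    have hge1 : ∀ᵐ x ∂μ, 1 ≤ h x := by
      rw [ae_iff]; simpa [not_le] using h0
    have hle : μ ≤ ν := by
      rw [← hνh]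
      refine Measure.le_iff.2 fun A hA => ?_
      rw [withDensity_apply _ hA]
      calc μ A = ∫⁻ x in A, 1 ∂μ := (setLIntegral_one A).symm
        _ ≤ ∫⁻ x in A, h x ∂μ := lintegral_mono_ae (ae_restrict_of_ae hge1)
    exact (measure_eq_of_le_of_univ hle (by simp)).symm
  -- find a finite threshold `β > 1` with `μ {h > β} ≠ 0`
  have hβex : ∃ β : ℝ≥0∞, 1 < β ∧ β ≠ ∞ ∧ μ {x | β < h x} ≠ 0 := by
    by_contra hno
    push_neg at hno
    apply hgt
    have hcover : {x | 1 < h x} ⊆ ⋃ n : ℕ, {x | 1 + ((n : ℝ≥0∞))⁻¹ < h x} := by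
      intro x hx
      simp only [Set.mem_setOf_eq] at hx
      rcases eq_or_ne (h x) ∞ with hT | hT
      · refine Set.mem_iUnion.2 ⟨1, ?_⟩
        show 1 + ((1 : ℕ) : ℝ≥0∞)⁻¹ < h x
        rw [hT]
        exact lt_top_iff_ne_top.2 (by simp)
      · have h1 : h x - 1 ≠ 0 := by
          rw [Ne, tsub_eq_zero_iff_le]
          exact not_le.2 hx
        obtain ⟨n, hn⟩ := ENNReal.exists_inv_nat_lt h1
        refine Set.mem_iUnion.2 ⟨n, ?_⟩
        show 1 + ((n : ℕ) : ℝ≥0∞)⁻¹ < h x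
        have h2 : (1 : ℝ≥0∞) + (n : ℝ≥0∞)⁻¹ < 1 + (h x - 1) :=
          ENNReal.add_lt_add_left ENNReal.one_ne_top hn
        rwa [add_tsub_cancel_of_le hx.le] at h2
    refine measure_mono_null hcover (measure_iUnion_null fun n => ?_)
    rcases Nat.eq_zero_or_pos n with h0 | hpos
    · subst h0
      have hempty : {x : U ⊕ Unit | 1 + ((0 : ℕ) : ℝ≥0∞)⁻¹ < h x} = ∅ := by
        ext x
        simp [ENNReal.inv_zero]
      rw [hempty]
      exact measure_empty
    · refine hno _ ?_ ?_
      · exact ENNReal.lt_add_right ENNReal.one_ne_top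
          (ENNReal.inv_ne_zero.2 (ENNReal.natCast_ne_top n))
      · exact ENNReal.add_ne_top.2 ⟨ENNReal.one_ne_top,
          ENNReal.inv_ne_top.2 (by exact_mod_cast hpos.ne')⟩
  -- find a positive threshold `α < 1` with `μ {h < α} ≠ 0`
  have hαex : ∃ α : ℝ≥0∞, 0 < α ∧ α < 1 ∧ μ {x | h x < α} ≠ 0 := by
    by_contra hno
    push_neg at hno
    apply hlt
    have hcover : {x | h x < 1} ⊆ ⋃ n : ℕ, {x | h x < 1 - ((n : ℝ≥0∞))⁻¹} := by
      intro x hx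
      simp only [Set.mem_setOf_eq] at hx
      have h1 : 1 - h x ≠ 0 := by
        rw [Ne, tsub_eq_zero_iff_le]
        exact not_le.2 hx
      obtain ⟨n, hn⟩ := ENNReal.exists_inv_nat_lt h1
      refine Set.mem_iUnion.2 ⟨n, ?_⟩
      show h x < 1 - ((n : ℕ) : ℝ≥0∞)⁻¹
      refine lt_tsub_iff_right.2 ?_
      have h2 : h x + (n : ℝ≥0∞)⁻¹ < h x + (1 - h x) :=
        ENNReal.add_lt_add_left (ne_top_of_lt hx) hn
      rwa [add_tsub_cancel_of_le hx.le] at h2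
    refine measure_mono_null hcover (measure_iUnion_null fun n => ?_)
    by_cases h0 : (1 : ℝ≥0∞) - ((n : ℝ≥0∞))⁻¹ = 0
    · have hempty : {x : U ⊕ Unit | h x < 1 - ((n : ℕ) : ℝ≥0∞)⁻¹} = ∅ := by
        ext x
        simp [h0]
      rw [hempty]
      exact measure_empty
    · refine hno _ (pos_iff_ne_zero.2 h0) ?_
      exact ENNReal.sub_lt_self ENNReal.one_ne_top one_ne_zero
        (ENNReal.inv_ne_zero.2 (ENNReal.natCast_ne_top n))
  obtain ⟨β, hβ1, hβT, hβpos⟩ := hβex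
  obtain ⟨α, hα0, hα1, hαpos⟩ := hαex
  -- choose a non-atom threshold `c` strictly between `α` and `β`
  have hDcount : Set.Countable {t : ℝ | 0 < μ {x | (h x).toReal = t}} :=
    Measure.countable_meas_level_set_pos hh.ennreal_toReal
  have hαβ : α.toReal < β.toReal :=
    ENNReal.toReal_strict_mono hβT (hα1.trans hβ1)
  have hIoo_unc : ¬ (Set.Ioo α.toReal β.toReal).Countable := by
    rw [← Cardinal.le_aleph0_iff_set_countable, Cardinal.mk_Ioo_real hαβ]
    exact Cardinal.aleph0_lt_continuum.not_ge
  obtain ⟨t, htmem, htD⟩ : ∃ t ∈ Set.Ioo α.toReal β.toReal,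
      ¬ 0 < μ {x | (h x).toReal = t} := by
    by_contra hcon
    push_neg at hcon
    exact hIoo_unc (hDcount.mono fun t ht => hcon t ht)
  have ht0 : 0 ≤ t := le_trans ENNReal.toReal_nonneg htmem.1.le
  set c : ℝ≥0∞ := ENNReal.ofReal t with hc_def
  have hcT : c ≠ ∞ := ENNReal.ofReal_ne_top
  have hαc : α < c := (ENNReal.lt_ofReal_iff_toReal_lt (ne_top_of_lt hα1)).2 htmem.1
  have hcβ : c < β := (ENNReal.ofReal_lt_iff_lt_toReal ht0 hβT).2 htmem.2
  have hatom : μ {x | h x = c} = 0 := by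
    have hsub : {x | h x = c} ⊆ {x | (h x).toReal = t} := by
      intro x hx
      simp only [Set.mem_setOf_eq] at hx ⊢
      rw [hx, hc_def, ENNReal.toReal_ofReal ht0]
    exact measure_mono_null hsub (le_zero_iff.1 (not_lt.1 htD))
  have hμA : μ {x | c < h x} ≠ 0 := by
    intro h0
    exact hβpos (measure_mono_null (fun x hx => lt_trans hcβ hx) h0)
  have hμB : μ {x | h x < c} ≠ 0 := by
    intro h0
    exact hαpos (measure_mono_null (fun x hx => lt_trans hx hαc) h0)
  -- the key invariance facts for the level sets of `h` at `c`
  obtain ⟨haeA, haeB⟩ := level_invariant κ μ ν hμbind hνbind hh hνh hcT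
  set A : Set (U ⊕ Unit) := {y | c < h y} with hA_def
  set B : Set (U ⊕ Unit) := {y | h y < c} with hB_def
  have hA : MeasurableSet A := measurableSet_lt measurable_const hh
  have hB : MeasurableSet B := measurableSet_lt hh measurable_const
  have haeM : ∀ᵐ x ∂μ, h x ≠ c := by
    rw [ae_iff]
    simpa using hatom
  have hsubAB : A ⊆ Bᶜ := by
    intro y hy
    have hy' : c < h y := hy
    simp only [hB_def, Set.mem_compl_iff, Set.mem_setOf_eq, not_lt]
    exact hy'.le
  have hκA_of_B : ∀ x, κ x B = 1 → κ x A = 0 := by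
    intro x hxB
    have h1 : κ x A ≤ κ x Bᶜ := measure_mono hsubAB
    rw [prob_compl_eq_one_sub hB, hxB, tsub_self] at h1
    exact le_zero_iff.1 h1
  have hae01 : ∀ᵐ x ∂μ, κ x A = 1 ∨ κ x A = 0 := by
    filter_upwards [haeA, haeB, haeM] with x h1 h2 h3
    rcases lt_trichotomy (h x) c with hlt' | heq | hgt'
    · exact Or.inr (hκA_of_B x (h2 hlt'))
    · exact absurd heq h3
    · exact Or.inl (h1 hgt')
  -- find witnesses in `RU` on both sides
  have hpt : ∀ (A' E : Set (U ⊕ Unit)), μ A' ≠ 0 → μ (A' \ E) = 0 → ∃ x ∈ RU, x ∈ E := by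
    intro A' E hA' hAE
    have hsub : A' ⊆ (A' \ E) ∪ (E ∩ RU) ∪ RUᶜ := by
      intro x hx
      by_cases hxE : x ∈ E
      · by_cases hxRU : x ∈ RU
        · exact Or.inl (Or.inr ⟨hxE, hxRU⟩)
        · exact Or.inr hxRU
      · exact Or.inl (Or.inl ⟨hx, hxE⟩)
    have hne' : μ (E ∩ RU) ≠ 0 := by
      intro h0
      apply hA'
      refine le_antisymm ?_ zero_le
      calc μ A' ≤ μ ((A' \ E) ∪ (E ∩ RU) ∪ RUᶜ) := measure_mono hsub
        _ ≤ μ ((A' \ E) ∪ (E ∩ RU)) + μ RUᶜ := measure_union_le _ _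
        _ ≤ μ (A' \ E) + μ (E ∩ RU) + μ RUᶜ := add_le_add (measure_union_le _ _) le_rfl
        _ = 0 := by rw [hAE, h0, hμRUc]; simp
    obtain ⟨x, hxE, hxRU⟩ := nonempty_of_measure_ne_zero hne'
    exact ⟨x, hxRU, hxE⟩
  have hAE1 : μ (A \ {x | κ x A = 1}) = 0 := by
    refine measure_mono_null ?_ (ae_iff.1 haeA)
    rintro x ⟨hxA, hxE⟩
    exact fun himp => hxE (himp hxA)
  obtain ⟨x₁, hx₁RU, hx₁⟩ := hpt A {x | κ x A = 1} hμA hAE1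
  have hBE1 : μ (B \ {x | κ x B = 1}) = 0 := by
    refine measure_mono_null ?_ (ae_iff.1 haeB)
    rintro x ⟨hxB, hxE⟩
    exact fun himp => hxE (himp hxB)
  obtain ⟨x₀, hx₀RU, hx₀⟩ := hpt B {x | κ x B = 1} hμB hBE1
  have hx₀A : κ x₀ A = 0 := hκA_of_B x₀ hx₀
  -- the connectedness argument
  have hfc : Continuous fun x => (κ x A).toReal := hcont A hA
  have hVnull : μ ((fun x => (κ x A).toReal) ⁻¹' Set.Ioo 0 1) = 0 := by
    refine measure_mono_null ?_ (ae_iff.1 hae01)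
    intro x hx
    simp only [Set.mem_preimage, Set.mem_Ioo] at hx
    simp only [Set.mem_setOf_eq]
    rintro (h1 | h1) <;> rw [h1] at hx <;> simp at hx
  have hconn : IsPreconnected RU := by
    have h1 := (isPreconnected_univ (α := U)).image (Sum.inl : U → U ⊕ Unit)
      continuous_inl.continuousOn
    rwa [Set.image_univ] at h1
  have hcover : RU ⊆ (fun x => (κ x A).toReal) ⁻¹' Set.Ioi 0
      ∪ (fun x => (κ x A).toReal) ⁻¹' Set.Iio 1 := by
    intro x _
    rcases lt_or_ge 0 ((κ x A).toReal) with hp | hp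
    · exact Or.inl hp
    · exact Or.inr (lt_of_le_of_lt hp one_pos)
  have hx₁mem : x₁ ∈ (fun x => (κ x A).toReal) ⁻¹' Set.Ioi 0 := by
    have hx₁' : κ x₁ A = 1 := hx₁
    simp only [Set.mem_preimage, Set.mem_Ioi, hx₁', ENNReal.toReal_one]
    exact one_pos
  have hx₀mem : x₀ ∈ (fun x => (κ x A).toReal) ⁻¹' Set.Iio 1 := by
    simp only [Set.mem_preimage, Set.mem_Iio, hx₀A, ENNReal.toReal_zero]
    exact one_pos
  obtain ⟨z, hzRU, hzu, hzv⟩ := hconn _ _ (isOpen_Ioi.preimage hfc) (isOpen_Iio.preimage hfc)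
    hcover ⟨x₁, hx₁RU, hx₁mem⟩ ⟨x₀, hx₀RU, hx₀mem⟩
  have hzV : z ∈ (fun x => (κ x A).toReal) ⁻¹' Set.Ioo 0 1 := ⟨hzu, hzv⟩
  exact absurd hVnull
    (hsupp_pos _ ((isOpen_Ioo).preimage hfc) z hzRU hzV).ne'
end

section
/- Let κ be a Markov kernel on a Polish space X which is strong Feller. Then for every point u ∈ X there exists an open neighbourhood N of u such that at most one ergodic invariant probability measure of κ has topological support intersecting N. -/
open MeasureTheory ProbabilityTheory

/-- An invariant measure `μ` is *ergodic* for `κ` if every Borel set `A` with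
`κ(x, A) = 1` for `μ`-almost every `x ∈ A` satisfies `μ A ∈ {0, 1}`. -/
def KernelErgodic {X : Type*} [MeasurableSpace X] (κ : Kernel X X) (μ : Measure X) : Prop :=
  ∀ A : Set X, MeasurableSet A → (∀ᵐ x ∂μ, x ∈ A → κ x A = 1) → μ A = 0 ∨ μ A = 1

open scoped ENNReal NNReal

section AuxLemmas

variable {X : Type*} [MeasurableSpace X] {κ : Kernel X X} [IsMarkovKernel κ]

set_option linter.unusedSectionVars false

lemma ae_mem_of_eq_one {μ : Measure X} [IsProbabilityMeasure μ] {A : Set X}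
    (hA : MeasurableSet A) (h : μ A = 1) : ∀ᵐ x ∂μ, x ∈ A := by
  have : μ Aᶜ = 0 := (prob_compl_eq_zero_iff hA).2 h
  filter_upwards [measure_eq_zero_iff_ae_notMem.1 this] with x hx using not_not.1 hx

lemma ae_kernel_eq_one {μ : Measure X} [IsProbabilityMeasure μ]
    (hinv : KernelInvariant κ μ) {A : Set X} (hA : MeasurableSet A) (hμA : μ A = 1) :
    ∀ᵐ x ∂μ, κ x A = 1 := by
  have hmeas : Measurable fun x => κ x A := κ.measurable_coe hA
  have h0 : ∫⁻ x, (1 - κ x A) ∂μ = 0 := by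
    rw [lintegral_sub hmeas (by rw [← hinv A hA, hμA]; exact ENNReal.one_ne_top)
      (ae_of_all _ fun x => prob_le_one), lintegral_one, measure_univ, ← hinv A hA, hμA,
      tsub_self]
  have := (lintegral_eq_zero_iff (measurable_const.sub hmeas)).1 h0
  filter_upwards [this] with x hx
  have : (1 : ℝ≥0∞) - κ x A = 0 := hx
  exact le_antisymm prob_le_one (tsub_eq_zero_iff_le.1 this)

lemma continuous_kernel_toReal [TopologicalSpace X] (hSF : IsStrongFeller κ)
    {A : Set X} (hA : MeasurableSet A) : Continuous fun x => (κ x A).toReal := by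
  have h := hSF (A.indicator 1) (measurable_one.indicator hA)
    ⟨1, fun x => by by_cases hx : x ∈ A <;> simp [Set.indicator_of_mem, Set.indicator_of_notMem, hx]⟩
  simpa only [integral_indicator_one hA, measureReal_def] using h

lemma kernel_eq_one_on_support [TopologicalSpace X] (hSF : IsStrongFeller κ)
    {μ : Measure X} [IsProbabilityMeasure μ] (hinv : KernelInvariant κ μ)
    {A : Set X} (hA : MeasurableSet A) (hμA : μ A = 1) {x : X} (hx : x ∈ measureSupport μ) :
    κ x A = 1 := by
  have hae := ae_kernel_eq_one hinv hA hμA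
  by_contra hne
  set g : X → ℝ := fun y => (κ y A).toReal with hgdef
  have hg : Continuous g := continuous_kernel_toReal hSF hA
  have hgx : x ∈ g ⁻¹' {(1:ℝ)}ᶜ := fun h =>
    hne ((ENNReal.toReal_eq_one_iff _).1 (Set.mem_singleton_iff.1 h))
  have hpos : 0 < μ (g ⁻¹' {(1:ℝ)}ᶜ) :=
    hx _ (isOpen_compl_singleton.preimage hg) hgx
  have hnull : μ (g ⁻¹' {(1:ℝ)}ᶜ) = 0 := by
    refine measure_mono_null ?_ (ae_iff.1 hae)
    intro y hy h1
    exact hy (by simp [hgdef, h1])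
  exact absurd hnull hpos.ne'



lemma exchange_lemma {m : Measure X} [IsFiniteMeasure m] (hinv : KernelInvariant κ m)
    {A : Set X} (hA : MeasurableSet A) :
    ∫⁻ x in A, κ x Aᶜ ∂m = ∫⁻ x in Aᶜ, κ x A ∂m := by
  have hκA : Measurable fun x => κ x A := κ.measurable_coe hA
  have hκB : Measurable fun x => κ x Aᶜ := κ.measurable_coe hA.compl
  have hone : ∀ x, κ x A + κ x Aᶜ = 1 := fun x => by
    rw [measure_add_measure_compl hA, measure_univ]
  have h1 : m A = ∫⁻ x in A, κ x A ∂m + ∫⁻ x in Aᶜ, κ x A ∂m := by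
    rw [hinv A hA]; exact (lintegral_add_compl _ hA).symm
  have h2 : m A = ∫⁻ x in A, κ x A ∂m + ∫⁻ x in A, κ x Aᶜ ∂m := by
    rw [← lintegral_add_left hκA]
    simp only [hone]
    exact (setLIntegral_one A).symm
  have hfin : ∫⁻ x in A, κ x A ∂m ≠ ∞ := by
    have hle : ∫⁻ x in A, κ x A ∂m ≤ m A := by
      calc ∫⁻ x in A, κ x A ∂m ≤ ∫⁻ _ in A, 1 ∂m := lintegral_mono fun x => prob_le_one
        _ = m A := setLIntegral_one A
    exact (lt_of_le_of_lt hle (measure_lt_top m A)).ne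
  exact (ENNReal.add_right_inj hfin).1 (h2.symm.trans h1)

lemma level_set_invariant {μ lam : Measure X} [IsProbabilityMeasure μ] [IsFiniteMeasure lam]
    (hinvμ : KernelInvariant κ μ) (hinvl : KernelInvariant κ lam)
    {g : X → ℝ≥0∞} (hg : Measurable g) (hlam : lam = μ.withDensity g)
    {c : ℝ≥0∞} (hc : c ≠ ⊤) :
    ∀ᵐ x ∂μ, x ∈ {y | g y < c} → κ x {y | g y < c} = 1 := by
  set A : Set X := {y | g y < c} with hAdef
  have hAm : MeasurableSet A := measurableSet_lt hg measurable_const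
  have hκA : Measurable fun x => κ x A := κ.measurable_coe hAm
  have hκB : Measurable fun x => κ x Aᶜ := κ.measurable_coe hAm.compl
  have hrw : ∀ (S : Set X), MeasurableSet S → ∀ (h : X → ℝ≥0∞), Measurable h →
      ∫⁻ x in S, h x ∂lam = ∫⁻ x in S, g x * h x ∂μ := by
    intro S hS h hh
    rw [hlam, restrict_withDensity hS, lintegral_withDensity_eq_lintegral_mul _ hg hh]
    rfl
  have hEμ := exchange_lemma hinvμ hAm
  have hEl := exchange_lemma hinvl hAm
  set I := ∫⁻ x in A, κ x Aᶜ ∂μ with hIdef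
  have hIfin : I ≠ ∞ := by
    have hle : I ≤ μ A := by
      calc I ≤ ∫⁻ _ in A, 1 ∂μ := lintegral_mono fun x => prob_le_one
        _ = μ A := setLIntegral_one A
    exact (lt_of_le_of_lt hle (measure_lt_top μ A)).ne
  have upper : ∫⁻ x in A, g x * κ x Aᶜ ∂μ ≤ c * I := by
    rw [hIdef, ← lintegral_const_mul c hκB]
    exact lintegral_mono_ae ((ae_restrict_mem hAm).mono fun x hx =>
      mul_le_mul_left (le_of_lt hx) _)
  have lower : c * I ≤ ∫⁻ x in A, g x * κ x Aᶜ ∂μ := by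
    calc c * I = c * ∫⁻ x in Aᶜ, κ x A ∂μ := by rw [hEμ]
      _ = ∫⁻ x in Aᶜ, c * κ x A ∂μ := (lintegral_const_mul c hκA).symm
      _ ≤ ∫⁻ x in Aᶜ, g x * κ x A ∂μ := lintegral_mono_ae
          ((ae_restrict_mem hAm.compl).mono fun x hx =>
            mul_le_mul_left (not_lt.1 fun hlt => hx hlt) _)
      _ = ∫⁻ x in Aᶜ, κ x A ∂lam := (hrw Aᶜ hAm.compl _ hκA).symm
      _ = ∫⁻ x in A, κ x Aᶜ ∂lam := hEl.symm
      _ = ∫⁻ x in A, g x * κ x Aᶜ ∂μ := hrw A hAm _ hκB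
  have heq : ∫⁻ x in A, g x * κ x Aᶜ ∂μ = ∫⁻ x in A, c * κ x Aᶜ ∂μ := by
    rw [lintegral_const_mul c hκB, ← hIdef]
    exact le_antisymm upper lower
  have hgfin : ∫⁻ x in A, g x * κ x Aᶜ ∂μ ≠ ∞ := by
    rw [heq, lintegral_const_mul c hκB, ← hIdef]
    exact ENNReal.mul_ne_top hc hIfin
  have hzero : ∫⁻ x in A, (c - g x) * κ x Aᶜ ∂μ = 0 := by
    have hsub : ∀ x, (c - g x) * κ x Aᶜ = c * κ x Aᶜ - g x * κ x Aᶜ := fun x =>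
      ENNReal.sub_mul fun _ _ => measure_ne_top _ _
    simp only [hsub]
    rw [lintegral_sub (show Measurable fun x => g x * κ x Aᶜ from hg.mul hκB) hgfin
      ((ae_restrict_mem hAm).mono fun x hx => mul_le_mul_left (le_of_lt hx) _),
      heq, tsub_self]
  have hae0 := (lintegral_eq_zero_iff ((measurable_const.sub hg).mul hκB)).1 hzero
  have : ∀ᵐ x ∂μ.restrict A, κ x A = 1 := by
    filter_upwards [ae_restrict_mem hAm, hae0] with x hxA hx0
    have hpos : c - g x ≠ 0 := by
      intro h
      exact absurd (tsub_eq_zero_iff_le.1 h) (not_le.2 hxA)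
    have hB0 : κ x Aᶜ = 0 := by
      rcases mul_eq_zero.1 hx0 with h | h
      · exact absurd h hpos
      · exact h
    have := measure_add_measure_compl (μ := κ x) hAm
    rwa [hB0, add_zero, measure_univ] at this
  exact (ae_restrict_iff' hAm).1 this


lemma invariant_ac_eq_smul {μ lam : Measure X} [IsProbabilityMeasure μ]
    [IsFiniteMeasure lam] (hinvμ : KernelInvariant κ μ) (hergμ : KernelErgodic κ μ)
    (hinvl : KernelInvariant κ lam) (hac : lam ≪ μ) :
    lam = lam Set.univ • μ := by
  set g := lam.rnDeriv μ with hgdef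
  have hg : Measurable g := Measure.measurable_rnDeriv lam μ
  have hlam : lam = μ.withDensity g := (Measure.withDensity_rnDeriv_eq lam μ hac).symm
  have hlevelm : ∀ c : ℝ≥0∞, MeasurableSet {y | g y < c} := fun c =>
    measurableSet_lt hg measurable_const
  have hlevel : ∀ c : ℝ≥0∞, c ≠ ⊤ → μ {y | g y < c} = 0 ∨ μ {y | g y < c} = 1 := fun c hc =>
    hergμ _ (hlevelm c) (level_set_invariant hinvμ hinvl hg hlam hc)
  -- S : thresholds giving full measure
  set S : Set ℝ≥0∞ := {c | c ≠ ⊤ ∧ μ {y | g y < c} = 1} with hSdef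
  have hSne : S.Nonempty := by
    have hfin : ∀ᵐ x ∂μ, g x < ⊤ := Measure.rnDeriv_lt_top lam μ
    have hU : ⋃ n : ℕ, {y | g y < (n : ℝ≥0∞)} = {y | g y < ⊤} := by
      ext y
      simp only [Set.mem_iUnion, Set.mem_setOf_eq]
      constructor
      · rintro ⟨n, hn⟩; exact lt_of_lt_of_le hn le_top
      · intro hy; exact ENNReal.exists_nat_gt hy.ne
    have hmono : Monotone fun n : ℕ => {y | g y < (n : ℝ≥0∞)} := by
      intro a b hab y hy
      simp only [Set.mem_setOf_eq] at hy ⊢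
      exact lt_of_lt_of_le hy (Nat.cast_le.2 hab)
    have h1 : μ {y | g y < ⊤} = 1 := by
      refine (prob_compl_eq_zero_iff (hlevelm ⊤)).1 ?_
      have hset : {y | g y < ⊤}ᶜ = {y | ¬ g y < ⊤} := by ext y; simp
      rw [hset]; exact ae_iff.1 hfin
    have htend : (⨆ n : ℕ, μ {y | g y < (n : ℝ≥0∞)}) = 1 := by
      rw [← hmono.measure_iUnion, hU, h1]
    have : ∃ n : ℕ, 0 < μ {y | g y < (n : ℝ≥0∞)} := by
      by_contra h
      push_neg at h
      simp only [nonpos_iff_eq_zero] at h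
      rw [iSup_congr h] at htend
      simp at htend
    obtain ⟨n, hn⟩ := this
    refine ⟨n, by simp, ?_⟩
    rcases hlevel n (by simp) with h | h
    · exact absurd h hn.ne'
    · exact h
  set t := sInf S with htdef
  obtain ⟨c₀, hc₀⟩ := hSne
  have ht_top : t ≠ ⊤ := (lt_of_le_of_lt (sInf_le hc₀) (lt_top_iff_ne_top.2 hc₀.1)).ne
  -- g ≤ t a.e.
  have hle : ∀ᵐ x ∂μ, g x ≤ t := by
    have hseq : ∀ n : ℕ, ∃ c ∈ S, c < t + 1/(n+1 : ℕ) := by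
      intro n
      refine sInf_lt_iff.1 ?_
      exact ENNReal.lt_add_right ht_top (by simp)
    choose cs hcsS hcslt using hseq
    have hcae : ∀ n : ℕ, ∀ᵐ x ∂μ, g x < cs n := fun n =>
      ae_mem_of_eq_one (hlevelm (cs n)) (hcsS n).2
    have hall := ae_all_iff.2 hcae
    filter_upwards [hall] with x hx
    refine ENNReal.le_of_forall_pos_le_add fun ε hε _ => ?_
    obtain ⟨n, hn⟩ := ENNReal.exists_inv_nat_lt (show (ε : ℝ≥0∞) ≠ 0 by exact_mod_cast hε.ne')
    have h1 : g x < t + 1/(n+1 : ℕ) := lt_of_lt_of_le (lt_of_lt_of_le (hx n) (hcslt n).le) le_rfl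
    have h2 : (1 : ℝ≥0∞)/(n+1 : ℕ) ≤ ε := by
      refine le_trans ?_ hn.le
      rw [one_div, ENNReal.inv_le_inv]
      exact_mod_cast Nat.le_succ n
    exact le_trans h1.le (add_le_add_right h2 t)
  -- g ≥ t a.e.
  have hge : ∀ᵐ x ∂μ, t ≤ g x := by
    rcases eq_or_ne t 0 with ht0 | ht0
    · filter_upwards with x; simp [ht0]
    · obtain ⟨us, hus_mono, hus_mem, hus_tend⟩ :=
        exists_seq_strictMono_tendsto' (show (0:ℝ≥0∞) < t from pos_iff_ne_zero.2 ht0)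
      have h0 : ∀ n, μ {y | g y < us n} = 0 := by
        intro n
        have husn : us n ∉ S := fun hmem => absurd (sInf_le hmem) (not_le.2 (hus_mem n).2)
        rcases hlevel (us n) (lt_of_lt_of_le (hus_mem n).2 le_top).ne with h | h
        · exact h
        · exact absurd ⟨((hus_mem n).2.trans_le le_top).ne, h⟩ husn
      have hae : ∀ n, ∀ᵐ x ∂μ, ¬ g x < us n := fun n =>
        measure_eq_zero_iff_ae_notMem.1 (h0 n)
      have hall := ae_all_iff.2 hae
      filter_upwards [hall] with x hx
      exact le_of_tendsto' hus_tend fun n => not_lt.1 (hx n)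
  have hconst : g =ᵐ[μ] fun _ => t := by
    filter_upwards [hle, hge] with x h1 h2 using le_antisymm h1 h2
  have h3 : lam = t • μ := by
    calc lam = μ.withDensity g := hlam
      _ = μ.withDensity (fun _ => t) := withDensity_congr_ae hconst
      _ = t • μ := withDensity_const t
  have h4 : lam Set.univ = t := by rw [h3]; simp
  rw [h4]; exact h3

lemma bind_univ_eq (m : Measure X) : (m.bind κ) Set.univ = m Set.univ := by
  rw [Measure.bind_apply MeasurableSet.univ κ.measurable.aemeasurable]
  simp

lemma bind_ac {m μ : Measure X} (hinvμ : KernelInvariant κ μ) (hac : m ≪ μ) :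
    m.bind κ ≪ μ := by
  refine Measure.AbsolutelyContinuous.mk fun s hs h0 => ?_
  rw [Measure.bind_apply hs κ.measurable.aemeasurable]
  have hz : ∫⁻ x, κ x s ∂μ = 0 := (hinvμ s hs).symm.trans h0
  have hae : ∀ᵐ x ∂μ, κ x s = 0 := (lintegral_eq_zero_iff (κ.measurable_coe hs)).1 hz
  exact (lintegral_eq_zero_iff (κ.measurable_coe hs)).2 (hae.filter_mono hac.ae_le)

lemma mutuallySingular_of_ne {μ ν : Measure X} [IsProbabilityMeasure μ]
    [IsProbabilityMeasure ν] (hinvμ : KernelInvariant κ μ) (hergμ : KernelErgodic κ μ)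
    (hinvν : KernelInvariant κ ν) (hergν : KernelErgodic κ ν) (hne : μ ≠ ν) :
    ν ⟂ₘ μ := by
  set lam := μ.withDensity (ν.rnDeriv μ) with hlamdef
  set s := ν.singularPart μ with hsdef
  have hdecomp : ν = s + lam := ν.haveLebesgueDecomposition_add μ
  have hlam_ac : lam ≪ μ := withDensity_absolutelyContinuous μ _
  set bl := lam.bind κ with hbldef
  set bs := s.bind κ with hbsdef
  haveI : IsFiniteMeasure bs := ⟨by rw [bind_univ_eq]; exact measure_lt_top s _⟩
  haveI : IsFiniteMeasure bl := ⟨by rw [bind_univ_eq]; exact measure_lt_top lam _⟩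
  have hbind_add : bl + bs = ν := by
    ext A hA
    rw [Measure.add_apply, hbldef, hbsdef,
      Measure.bind_apply hA κ.measurable.aemeasurable,
      Measure.bind_apply hA κ.measurable.aemeasurable,
      ← lintegral_add_measure]
    have hsum : lam + s = ν := by rw [hdecomp, add_comm]
    rw [hsum]
    exact (hinvν A hA).symm
  have hbl_ac : bl ≪ μ := bind_ac hinvμ hlam_ac
  set β := bs.singularPart μ with hβdef
  set α := μ.withDensity (bs.rnDeriv μ) with hαdef
  have hbs : bs = β + α := bs.haveLebesgueDecomposition_add μ
  have hν2 : ν = β + (bl + α) := by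
    rw [← hbind_add, hbs]
    exact (add_left_comm β bl α ▸ rfl)
  have hblα_ac : bl + α ≪ μ :=
    Measure.AbsolutelyContinuous.add_left hbl_ac (withDensity_absolutelyContinuous μ _)
  have hβ_sing : β ⟂ₘ μ := Measure.mutuallySingular_singularPart bs μ
  have hwd : μ.withDensity ((bl + α).rnDeriv μ) = bl + α :=
    Measure.withDensity_rnDeriv_eq _ _ hblα_ac
  have huniq := Measure.eq_withDensity_rnDeriv (Measure.measurable_rnDeriv (bl + α) μ)
    hβ_sing (show ν = β + μ.withDensity ((bl + α).rnDeriv μ) by rw [hwd]; exact hν2)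
  -- huniq : μ.withDensity ((bl+α).rnDeriv μ) = μ.withDensity (ν.rnDeriv μ)
  have hlam_eq : lam = bl + α := by rw [hlamdef, ← huniq, hwd]
  have hmass : lam Set.univ = bl Set.univ := (bind_univ_eq lam).symm
  have hα0 : α = 0 := by
    have hα_univ : α Set.univ = 0 := by
      have h := congrArg (fun m : Measure X => m Set.univ) hlam_eq
      simp only [Measure.add_apply] at h
      rw [← hmass] at h
      have hfin : lam Set.univ ≠ ∞ := measure_ne_top lam _
      have := (ENNReal.add_right_inj hfin).1
        (by rw [← h, add_zero] : lam Set.univ + 0 = lam Set.univ + α Set.univ)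
      exact this.symm
    exact Measure.measure_univ_eq_zero.1 hα_univ
  have hbl_eq : bl = lam := by rw [hlam_eq, hα0, add_zero]
  have hinvlam : KernelInvariant κ lam := by
    intro A hA
    rw [← Measure.bind_apply hA κ.measurable.aemeasurable, ← hbldef, hbl_eq]
  haveI : IsFiniteMeasure lam := by
    constructor
    have : lam Set.univ ≤ ν Set.univ := by
      rw [hdecomp]; exact le_add_self.trans_eq rfl
    exact lt_of_le_of_lt this (measure_lt_top ν _)
  have h1 : lam = lam Set.univ • μ := invariant_ac_eq_smul hinvμ hergμ hinvlam hlam_ac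
  have hlam_le : lam ≤ ν := hdecomp ▸ Measure.le_add_left (le_refl lam)
  have h2 : lam = lam Set.univ • ν :=
    invariant_ac_eq_smul hinvν hergν hinvlam hlam_le.absolutelyContinuous
  by_cases hm : lam Set.univ = 0
  · have hlam0 : lam = 0 := Measure.measure_univ_eq_zero.1 hm
    rw [hdecomp, hlam0, add_zero, hsdef]
    exact Measure.mutuallySingular_singularPart ν μ
  · exfalso
    apply hne
    have hsmul : lam Set.univ • μ = lam Set.univ • ν := h1.symm.trans h2
    have hmfin : lam Set.univ ≠ ∞ := measure_ne_top lam _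
    ext A hA
    have := congrArg (fun m : Measure X => m A) hsmul
    simp only [Measure.smul_apply, smul_eq_mul] at this
    exact (ENNReal.mul_right_inj hm hmfin).1 this

end AuxLemmas

/-- For a strong Feller Markov kernel on a Polish space, every point has
an open neighbourhood met by the support of at most one ergodic invariant probability
measure. -/
theorem exists_nhd_unique_ergodic_support
    {X : Type*} [TopologicalSpace X] [PolishSpace X] [MeasurableSpace X] [BorelSpace X]
    (κ : Kernel X X) [IsMarkovKernel κ] (hSF : IsStrongFeller κ) (u : X) :
    ∃ N : Set X, IsOpen N ∧ u ∈ N ∧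
      ∀ μ ν : Measure X, IsProbabilityMeasure μ → IsProbabilityMeasure ν →
        KernelInvariant κ μ → KernelErgodic κ μ →
        KernelInvariant κ ν → KernelErgodic κ ν →
        (measureSupport μ ∩ N).Nonempty → (measureSupport ν ∩ N).Nonempty →
        μ = ν := by
  classical
  by_contra hcon
  push_neg at hcon
  letI := TopologicalSpace.upgradeIsCompletelyMetrizable X
  -- no two distinct ergodic invariant measures both have u in their support
  have key2 : ∀ μ ν : Measure X, IsProbabilityMeasure μ → IsProbabilityMeasure ν →
      KernelInvariant κ μ → KernelErgodic κ μ → KernelInvariant κ ν → KernelErgodic κ ν →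
      μ ≠ ν → u ∈ measureSupport μ → u ∈ measureSupport ν → False := by
    intro μ ν hμp hνp hμi hμe hνi hνe hne hu1 hu2
    haveI := hμp; haveI := hνp
    obtain ⟨s, hs, hνs, hμsc⟩ := mutuallySingular_of_ne (κ := κ) hμi hμe hνi hνe hne
    -- hνs : ν s = 0, hμsc : μ sᶜ = 0
    have hμs : μ s = 1 := (prob_compl_eq_zero_iff hs).1 hμsc
    have hνsc : ν sᶜ = 1 := by
      have := measure_add_measure_compl (μ := ν) hs
      rwa [hνs, zero_add, measure_univ] at this
    have k1 : κ u s = 1 := kernel_eq_one_on_support hSF hμi hs hμs hu1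
    have k2 : κ u sᶜ = 1 := kernel_eq_one_on_support hSF hνi hs.compl hνsc hu2
    have hsum := measure_add_measure_compl (μ := κ u) hs
    rw [k1, k2, measure_univ] at hsum
    norm_num at hsum
  -- choose bad pairs in each ball
  have hpairs : ∀ n : ℕ, ∃ μ ν : Measure X, IsProbabilityMeasure μ ∧ IsProbabilityMeasure ν ∧
      KernelInvariant κ μ ∧ KernelErgodic κ μ ∧ KernelInvariant κ ν ∧ KernelErgodic κ ν ∧
      (measureSupport μ ∩ Metric.ball u (1/(n+1))).Nonempty ∧
      (measureSupport ν ∩ Metric.ball u (1/(n+1))).Nonempty ∧ μ ≠ ν := fun n =>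
    hcon (Metric.ball u (1/(n+1))) Metric.isOpen_ball (Metric.mem_ball_self (by positivity))
  choose μs νs h1 h2 h3 h4 h5 h6 h7 h8 h9 using hpairs
  set ρ : ℕ → Measure X := fun n => if u ∈ measureSupport (μs n) then νs n else μs n with hρdef
  have hρprop : ∀ n, IsProbabilityMeasure (ρ n) ∧ KernelInvariant κ (ρ n) ∧
      KernelErgodic κ (ρ n) ∧
      (measureSupport (ρ n) ∩ Metric.ball u (1/(n+1))).Nonempty ∧
      u ∉ measureSupport (ρ n) := by
    intro n
    by_cases h : u ∈ measureSupport (μs n)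
    · simp only [hρdef, if_pos h]
      exact ⟨h2 n, h5 n, h6 n, h8 n,
        fun hu => key2 (μs n) (νs n) (h1 n) (h2 n) (h3 n) (h4 n) (h5 n) (h6 n) (h9 n) h hu⟩
    · simp only [hρdef, if_neg h]
      exact ⟨h1 n, h3 n, h4 n, h7 n, h⟩
  -- every measure occurs only finitely often
  have hfin : ∀ m : Measure X, {n | ρ n = m}.Finite := by
    intro m
    rw [← Set.not_infinite]
    intro hinf
    obtain ⟨n₀, hn₀⟩ := hinf.nonempty
    have husup : u ∈ measureSupport m := by
      intro V hV hxV
      obtain ⟨ε, hε, hsub⟩ := Metric.isOpen_iff.1 hV u hxV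
      obtain ⟨k, hk⟩ := exists_nat_gt (1/ε)
      obtain ⟨n, hnmem, hnk⟩ := hinf.exists_gt k
      have hεn : 1/((n:ℝ)+1) < ε := by
        rw [div_lt_iff₀ (by positivity)]
        rw [div_lt_iff₀ hε] at hk
        calc (1:ℝ) < ε * k := by linarith [hk]
          _ ≤ ε * (n+1) := by
            have : (k:ℝ) ≤ (n:ℝ)+1 := by exact_mod_cast Nat.le_succ_of_le hnk.le
            nlinarith
      obtain ⟨y, hy1, hy2⟩ := (hρprop n).2.2.2.1
      rw [hnmem] at hy1
      refine hy1 V hV (hsub ?_)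
      exact Metric.mem_ball.2 (lt_trans (Metric.mem_ball.1 hy2) hεn)
    exact (hρprop n₀).2.2.2.2 (hn₀ ▸ husup)
  -- extract an injective subsequence
  have hnext : ∀ m : ℕ, ∃ n, m < n ∧ ∀ i ≤ m, ρ n ≠ ρ i := by
    intro m
    have hfin2 : ({n | ∃ i ≤ m, ρ n = ρ i} : Set ℕ).Finite := by
      have hsub : {n | ∃ i ≤ m, ρ n = ρ i} ⊆ ⋃ i ∈ Finset.range (m+1), {n | ρ n = ρ i} := by
        rintro n ⟨i, hi, hn⟩
        exact Set.mem_biUnion (Finset.mem_range.2 (Nat.lt_succ_of_le hi)) hn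
      exact (Set.Finite.biUnion (Finset.range (m+1)).finite_toSet
        fun i _ => hfin (ρ i)).subset hsub
    obtain ⟨B, hB⟩ := (hfin2.union (Set.finite_Iic m)).bddAbove
    refine ⟨B+1, ?_, ?_⟩
    · by_contra h
      push_neg at h
      have : B+1 ∈ Set.Iic m := Set.mem_Iic.2 h
      exact absurd (hB (Set.mem_union_right _ this)) (by omega)
    · intro i hi heq
      have : B+1 ∈ {n | ∃ i ≤ m, ρ n = ρ i} := ⟨i, hi, heq⟩
      exact absurd (hB (Set.mem_union_left _ this)) (by omega)
  choose nxt hnxt1 hnxt2 using hnext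
  set idx : ℕ → ℕ := fun k => Nat.rec 0 (fun _ prev => nxt prev) k with hidxdef
  have hidx_succ : ∀ k, idx (k+1) = nxt (idx k) := fun k => rfl
  have hidx_mono : StrictMono idx := strictMono_nat_of_lt_succ fun k => hnxt1 (idx k)
  have hidx_ne : ∀ j k, j < k → ρ (idx k) ≠ ρ (idx j) := by
    intro j k hjk
    obtain ⟨k', rfl⟩ : ∃ k', k = k' + 1 := ⟨k - 1, by omega⟩
    have hle : idx j ≤ idx k' := hidx_mono.monotone (by omega)
    rw [hidx_succ]
    exact hnxt2 (idx k') (idx j) hle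
  set σ : ℕ → Measure X := fun k => ρ (idx k) with hσdef
  have hσp : ∀ k, IsProbabilityMeasure (σ k) := fun k => (hρprop (idx k)).1
  have hσi : ∀ k, KernelInvariant κ (σ k) := fun k => (hρprop (idx k)).2.1
  have hσe : ∀ k, KernelErgodic κ (σ k) := fun k => (hρprop (idx k)).2.2.1
  have hσne : ∀ j k, j ≠ k → σ j ≠ σ k := by
    intro j k hjk
    rcases lt_or_gt_of_ne hjk with h | h
    · exact fun heq => hidx_ne j k h heq.symm
    · exact fun heq => hidx_ne k j h heq
  -- points in supports converging to u
  choose y hy1 hy2 using fun k => (hρprop (idx k)).2.2.2.1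
  have hy_tend : Filter.Tendsto y Filter.atTop (nhds u) := by
    rw [tendsto_iff_dist_tendsto_zero]
    refine squeeze_zero (fun k => dist_nonneg) (fun k => ?_) tendsto_one_div_add_atTop_nhds_zero_nat
    have hball := Metric.mem_ball.1 (hy2 k)
    have hk : (k:ℝ) + 1 ≤ (idx k : ℝ) + 1 := by
      have : k ≤ idx k := hidx_mono.le_apply
      exact_mod_cast Nat.succ_le_succ this
    calc dist (y k) u ≤ 1/((idx k : ℝ)+1) := hball.le
      _ ≤ 1/((k:ℝ)+1) := by
        apply one_div_le_one_div_of_le (by positivity) hk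
  -- separating sets
  have hTex : ∀ k j : ℕ, ∃ T : Set X, MeasurableSet T ∧ (j ≠ k → σ k T = 1 ∧ σ j T = 0) := by
    intro k j
    by_cases h : j = k
    · exact ⟨Set.univ, MeasurableSet.univ, fun hj => absurd h hj⟩
    · haveI := hσp k; haveI := hσp j
      obtain ⟨t, ht, hkt, hjtc⟩ :=
        mutuallySingular_of_ne (κ := κ) (hσi j) (hσe j) (hσi k) (hσe k) (hσne j k h)
      -- hkt : σ k t = 0, hjtc : σ j tᶜ = 0
      refine ⟨tᶜ, ht.compl, fun _ => ⟨?_, hjtc⟩⟩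
      exact (prob_compl_eq_zero_iff ht.compl).1 (by rwa [compl_compl])
  choose T hTm hTp using hTex
  -- pairwise disjoint full sets
  set D : ℕ → ℕ → Set X := fun k j => if j = k then Set.univ else T k j ∩ (T j k)ᶜ with hDdef
  have hDm : ∀ k j, MeasurableSet (D k j) := by
    intro k j
    by_cases h : j = k
    · simp only [hDdef, if_pos h]; exact MeasurableSet.univ
    · simp only [hDdef, if_neg h]; exact (hTm k j).inter (hTm j k).compl
  set A : ℕ → Set X := fun k => ⋂ j, D k j with hAdef
  have hAm : ∀ k, MeasurableSet (A k) := fun k => MeasurableSet.iInter fun j => hDm k j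
  have hAfull : ∀ k, σ k (A k) = 1 := by
    intro k
    haveI := hσp k
    refine (prob_compl_eq_zero_iff (hAm k)).1 ?_
    have hcompl : (A k)ᶜ = ⋃ j, (D k j)ᶜ := by
      rw [hAdef]; simp [Set.compl_iInter]
    rw [hcompl]
    refine measure_iUnion_null fun j => ?_
    by_cases h : j = k
    · simp [hDdef, if_pos h]
    · simp only [hDdef, if_neg h, Set.compl_inter, compl_compl]
      refine measure_union_null ?_ ?_
      · exact (prob_compl_eq_zero_iff (hTm k j)).2 ((hTp k j h).1)
      · exact ((hTp j k) (fun hkj => h hkj.symm)).2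
  have hAdisj : ∀ j k, j ≠ k → Disjoint (A j) (A k) := by
    intro j k hjk
    have hsub1 : A j ⊆ T j k := by
      intro x hx
      have := Set.mem_iInter.1 hx k
      simp only [hDdef, if_neg (Ne.symm hjk)] at this
      exact this.1
    have hsub2 : A k ⊆ (T j k)ᶜ := by
      intro x hx
      have := Set.mem_iInter.1 hx j
      simp only [hDdef, if_neg hjk] at this
      exact this.2
    exact Set.disjoint_left.2 fun x hxj hxk => hsub2 hxk (hsub1 hxj)
  -- the union of even-indexed sets
  set Aun : Set X := ⋃ i, A (2*i) with hAundef
  have hAunm : MeasurableSet Aun := MeasurableSet.iUnion fun i => hAm (2*i)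
  have hgcont : Continuous fun x => (κ x Aun).toReal := continuous_kernel_toReal hSF hAunm
  -- values on the points
  have hyk : ∀ k, κ (y k) (A k) = 1 := by
    intro k
    haveI := hσp k
    exact kernel_eq_one_on_support hSF (hσi k) (hAm k) (hAfull k) (hy1 k)
  have heven : ∀ i, (κ (y (2*i)) Aun).toReal = 1 := by
    intro i
    have hge : κ (y (2*i)) Aun ≥ 1 := by
      rw [← hyk (2*i)]
      exact measure_mono (Set.subset_iUnion (fun i => A (2*i)) i)
    have hle : κ (y (2*i)) Aun ≤ 1 := prob_le_one
    rw [le_antisymm hle hge]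
    simp
  have hodd : ∀ i, (κ (y (2*i+1)) Aun).toReal = 0 := by
    intro i
    have h0 : κ (y (2*i+1)) Aun = 0 := by
      have hsub : Aun ⊆ (A (2*i+1))ᶜ := by
        refine Set.iUnion_subset fun j => ?_
        exact Set.subset_compl_iff_disjoint_left.2 ((hAdisj (2*j) (2*i+1) (by omega)).symm)
      have hcompl0 : κ (y (2*i+1)) (A (2*i+1))ᶜ = 0 :=
        (prob_compl_eq_zero_iff (hAm (2*i+1))).2 (hyk (2*i+1))
      exact le_antisymm (le_trans (measure_mono hsub) hcompl0.le) zero_le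
    rw [h0]; simp
  -- contradiction via continuity
  have htt1 : Filter.Tendsto (fun i : ℕ => 2*i) Filter.atTop Filter.atTop :=
    Filter.tendsto_atTop_mono (fun i => by simp only [id_eq]; omega) Filter.tendsto_id
  have htt2 : Filter.Tendsto (fun i : ℕ => 2*i+1) Filter.atTop Filter.atTop :=
    Filter.tendsto_atTop_mono (fun i => by simp only [id_eq]; omega) Filter.tendsto_id
  have hlim1 : Filter.Tendsto (fun i : ℕ => (κ (y (2*i)) Aun).toReal)
      Filter.atTop (nhds ((κ u Aun).toReal)) :=
    (hgcont.tendsto u).comp (hy_tend.comp htt1)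
  have hlim2 : Filter.Tendsto (fun i : ℕ => (κ (y (2*i+1)) Aun).toReal)
      Filter.atTop (nhds ((κ u Aun).toReal)) :=
    (hgcont.tendsto u).comp (hy_tend.comp htt2)
  have e1 : (κ u Aun).toReal = 1 := by
    refine tendsto_nhds_unique hlim1 ?_
    simp only [heven]
    exact tendsto_const_nhds
  have e2 : (κ u Aun).toReal = 0 := by
    refine tendsto_nhds_unique hlim2 ?_
    simp only [hodd]
    exact tendsto_const_nhds
  rw [e1] at e2
  norm_num at e2
end
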